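/- McDiarmid's inequality: let q : Z_1 × ⋯ × Z_n → ℝ satisfy the bounded differences property with constants c_1,…,c_n, and let Z_1,…,Z_n be independent random variables. Then for all ε > 0, P(q(Z_1,…,Z_n) − E[q(Z_1,…,Z_n)] > ε) ≤ exp(−2ε² / Σ_i c_i²). -/

import Mathlib

open MeasureTheory ProbabilityTheory

section McdAux
open Real

universe u


lemma mcd_D_pos {p : ℝ} (hp0 : 0 ≤ p) (hp1 : p ≤ 1) (h : ℝ) :
    0 < 1 - p + p * Real.exp h := by
  rcases eq_or_lt_of_le hp0 with h0 | h0
  · simp [← h0]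
  · have := Real.exp_pos h
    nlinarith

lemma hoeffding_aux {p : ℝ} (hp0 : 0 ≤ p) (hp1 : p ≤ 1) (h : ℝ) :
    Real.log (1 - p + p * Real.exp h) - p * h ≤ h ^ 2 / 8 := by
  set φ : ℝ → ℝ := fun x => Real.log (1 - p + p * Real.exp x) - p * x with hφ
  set g : ℝ → ℝ := fun x => x ^ 2 / 8 - φ x with hg
  set g' : ℝ → ℝ := fun x => x / 4 - (p * Real.exp x / (1 - p + p * Real.exp x) - p) with hg'
  have hD : ∀ x, 0 < 1 - p + p * Real.exp x := fun x => mcd_D_pos hp0 hp1 x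
  have hdg : ∀ x : ℝ, HasDerivAt g (g' x) x := by
    intro x
    have hDd : HasDerivAt (fun y => 1 - p + p * Real.exp y) (p * Real.exp x) x := by
      simpa using ((Real.hasDerivAt_exp x).const_mul p).const_add (1 - p)
    have hlog : HasDerivAt (fun y => Real.log (1 - p + p * Real.exp y))
        (p * Real.exp x / (1 - p + p * Real.exp x)) x := hDd.log (hD x).ne'
    have hφ' : HasDerivAt φ (p * Real.exp x / (1 - p + p * Real.exp x) - p) x := by
      have h := hlog.sub ((hasDerivAt_id x).const_mul p); rw [mul_one] at h; exact h
    have hsq : HasDerivAt (fun y : ℝ => y ^ 2 / 8) (x / 4) x := by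
      have := (hasDerivAt_pow 2 x).div_const 8
      exact this.congr_deriv (by ring)
    exact hsq.sub hφ'
  have hdg' : ∀ x : ℝ, HasDerivAt g'
      (1 / 4 - (p * Real.exp x * (1 - p)) / (1 - p + p * Real.exp x) ^ 2) x := by
    intro x
    have hDd : HasDerivAt (fun y => 1 - p + p * Real.exp y) (p * Real.exp x) x := by
      simpa using ((Real.hasDerivAt_exp x).const_mul p).const_add (1 - p)
    have hnum : HasDerivAt (fun y => p * Real.exp y) (p * Real.exp x) x :=
      (Real.hasDerivAt_exp x).const_mul p
    have hdiv : HasDerivAt (fun y => p * Real.exp y / (1 - p + p * Real.exp y))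
        ((p * Real.exp x * (1 - p + p * Real.exp x) - p * Real.exp x * (p * Real.exp x)) /
          (1 - p + p * Real.exp x) ^ 2) x := hnum.div hDd (hD x).ne'
    have h4 : HasDerivAt (fun y : ℝ => y / 4) (1 / 4 : ℝ) x := by
      simpa using (hasDerivAt_id x).div_const 4
    have := h4.sub (hdiv.sub_const p)
    show HasDerivAt (fun y => y / 4 - (p * Real.exp y / (1 - p + p * Real.exp y) - p)) _ x
    exact this.congr_deriv (by ring)
  have hderiv_nonneg : ∀ x : ℝ,
      0 ≤ 1 / 4 - (p * Real.exp x * (1 - p)) / (1 - p + p * Real.exp x) ^ 2 := by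
    intro x
    rw [sub_nonneg, div_le_div_iff₀ (pow_pos (hD x) 2) (by norm_num : (0:ℝ) < 4)]
    · nlinarith [sq_nonneg (1 - p - p * Real.exp x), (hD x).le]
  have hg'mono : Monotone g' := by
    have : ∀ x : ℝ, 0 ≤ deriv g' x := fun x => by
      rw [(hdg' x).deriv]; exact hderiv_nonneg x
    exact monotone_of_deriv_nonneg (fun x => (hdg' x).differentiableAt) this
  have hg'0 : g' 0 = 0 := by simp [hg']
  have hgc : Continuous g := by
    exact (Differentiable.continuous fun x => (hdg x).differentiableAt)
  have hg0 : g 0 = 0 := by simp [hg, hφ]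
  have key : 0 ≤ g h := by
    rcases le_total 0 h with hh | hh
    · have hmono : MonotoneOn g (Set.Ici (0:ℝ)) := by
        refine monotoneOn_of_deriv_nonneg (convex_Ici 0) hgc.continuousOn
          (fun x _ => (hdg x).differentiableAt.differentiableWithinAt) ?_
        intro x hx
        rw [(hdg x).deriv]
        have : (0:ℝ) ≤ x := le_of_lt (by simpa using hx)
        have := hg'mono this
        rw [hg'0] at this
        exact this
      have := hmono (Set.self_mem_Ici) (Set.mem_Ici.mpr hh) hh
      rwa [hg0] at this
    · have hanti : AntitoneOn g (Set.Iic (0:ℝ)) := by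
        refine antitoneOn_of_deriv_nonpos (convex_Iic 0) hgc.continuousOn
          (fun x _ => (hdg x).differentiableAt.differentiableWithinAt) ?_
        intro x hx
        rw [(hdg x).deriv]
        have hx0 : x ≤ 0 := le_of_lt (by simpa using hx)
        have := hg'mono hx0
        rw [hg'0] at this
        exact this
      have := hanti (Set.mem_Iic.mpr hh) (Set.self_mem_Iic) hh
      rwa [hg0] at this
  have : φ h ≤ h ^ 2 / 8 := by
    have := key
    simp only [hg] at this
    linarith
  simpa [hφ] using this


lemma integrable_of_bdd {α : Type*} [MeasurableSpace α] {ν : Measure α} [IsFiniteMeasure ν]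
    {f : α → ℝ} (hf : Measurable f) {C : ℝ} (h : ∀ x, |f x| ≤ C) : Integrable f ν :=
  (integrable_const C).mono' hf.aestronglyMeasurable
    (ae_of_all _ (by simpa [Real.norm_eq_abs] using h))

lemma hoeffding_lemma {α : Type*} [MeasurableSpace α] (ν : Measure α) [IsProbabilityMeasure ν]
    {X : α → ℝ} (hX : Measurable X) {a b : ℝ} (hab : ∀ x, X x ∈ Set.Icc a b)
    (h0 : ∫ x, X x ∂ν = 0) (t : ℝ) :
    ∫ x, Real.exp (t * X x) ∂ν ≤ Real.exp (t ^ 2 * (b - a) ^ 2 / 8) := by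
  have hne : Nonempty α := by
    by_contra hempty
    have : ν Set.univ = 0 := by
      simp [Set.univ_eq_empty_iff.mpr (not_nonempty_iff.mp hempty)]
    simp [measure_univ] at this
  obtain ⟨x₀⟩ := hne
  have hXint : Integrable X ν :=
    integrable_of_bdd hX (C := max |a| |b|) (fun x => abs_le.mpr
      ⟨le_trans (neg_le_neg (le_max_left |a| |b|)) (le_trans (neg_abs_le a) (hab x).1),
       le_trans (hab x).2 (le_trans (le_abs_self b) (le_max_right |a| |b|))⟩)
  have hale : a ≤ 0 := by
    calc a = ∫ _, a ∂ν := by simp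
    _ ≤ ∫ x, X x ∂ν := integral_mono (integrable_const a) hXint (fun x => (hab x).1)
    _ = 0 := h0
  have hble : 0 ≤ b := by
    calc (0:ℝ) = ∫ x, X x ∂ν := h0.symm
    _ ≤ ∫ _, b ∂ν := integral_mono hXint (integrable_const b) (fun x => (hab x).2)
    _ = b := by simp
  have hab' : a ≤ b := hale.trans hble
  rcases eq_or_lt_of_le hab' with heq | hlt
  · -- a = b, so a = 0 = b and X = 0
    have hb0 : b = 0 := by
      have := heq ▸ hale
      exact le_antisymm this hble
    have ha0 : a = 0 := by rw [heq, hb0]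
    have hX0 : ∀ x, X x = 0 := fun x => le_antisymm (hb0 ▸ (hab x).2) (ha0 ▸ (hab x).1)
    simp only [hX0, mul_zero, Real.exp_zero]
    rw [integral_const]
    simp [Real.exp_nonneg, Real.one_le_exp_iff]
    positivity
  · -- a < b
    have hba : 0 < b - a := sub_pos.mpr hlt
    have hExpInt : Integrable (fun x => Real.exp (t * X x)) ν := by
      refine integrable_of_bdd (by fun_prop) (C := Real.exp (|t| * max |a| |b|)) (fun x => ?_)
      rw [abs_of_pos (Real.exp_pos _)]
      apply Real.exp_le_exp.mpr
      calc t * X x ≤ |t * X x| := le_abs_self _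
      _ = |t| * |X x| := abs_mul t _
      _ ≤ |t| * max |a| |b| := by
          apply mul_le_mul_of_nonneg_left _ (abs_nonneg t)
          exact abs_le.mpr ⟨le_trans (neg_le_neg (le_max_left |a| |b|))
            (le_trans (neg_abs_le a) (hab x).1),
            le_trans (hab x).2 (le_trans (le_abs_self b) (le_max_right |a| |b|))⟩
    -- convexity bound pointwise
    have hconv : ∀ x, Real.exp (t * X x) ≤
        ((b - X x) * Real.exp (t * a) + (X x - a) * Real.exp (t * b)) / (b - a) := by
      intro x
      obtain ⟨h1, h2⟩ := hab x
      have hθ1 : 0 ≤ (b - X x) / (b - a) := div_nonneg (by linarith) hba.le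
      have hθ2 : 0 ≤ (X x - a) / (b - a) := div_nonneg (by linarith) hba.le
      have hθs : (b - X x) / (b - a) + (X x - a) / (b - a) = 1 := by
        field_simp
        ring
      have := convexOn_exp.2 (Set.mem_univ (t * a)) (Set.mem_univ (t * b)) hθ1 hθ2 hθs
      simp only [smul_eq_mul] at this
      have harg : (b - X x) / (b - a) * (t * a) + (X x - a) / (b - a) * (t * b) = t * X x := by
        field_simp
        ring
      rw [harg] at this
      calc Real.exp (t * X x) ≤ (b - X x) / (b - a) * Real.exp (t * a)
            + (X x - a) / (b - a) * Real.exp (t * b) := this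
      _ = ((b - X x) * Real.exp (t * a) + (X x - a) * Real.exp (t * b)) / (b - a) := by
          ring
    have hi1 : Integrable (fun x => (b - X x) * Real.exp (t * a)) ν :=
      ((integrable_const b).sub hXint).mul_const _
    have hi2 : Integrable (fun x => (X x - a) * Real.exp (t * b)) ν :=
      (hXint.sub (integrable_const a)).mul_const _
    have hint2 : Integrable (fun x =>
        ((b - X x) * Real.exp (t * a) + (X x - a) * Real.exp (t * b)) / (b - a)) ν :=
      (hi1.add hi2).div_const _
    have step1 : ∫ x, Real.exp (t * X x) ∂ν ≤
        (b * Real.exp (t * a) - a * Real.exp (t * b)) / (b - a) := by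
      calc ∫ x, Real.exp (t * X x) ∂ν ≤ ∫ x,
          ((b - X x) * Real.exp (t * a) + (X x - a) * Real.exp (t * b)) / (b - a) ∂ν :=
            integral_mono hExpInt hint2 hconv
      _ = (b * Real.exp (t * a) - a * Real.exp (t * b)) / (b - a) := by
          rw [integral_div]
          congr 1
          rw [integral_add hi1 hi2, integral_mul_const, integral_mul_const,
            integral_sub (integrable_const b) hXint, integral_sub hXint (integrable_const a), h0]
          simp
          ring
    refine step1.trans ?_
    -- now the analytic bound
    set p := -a / (b - a) with hp
    set h := t * (b - a) with hh
    have hp0 : 0 ≤ p := div_nonneg (by linarith) hba.le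
    have hp1 : p ≤ 1 := by
      rw [div_le_one hba]; linarith
    have hDpos : 0 < 1 - p + p * Real.exp h := by
      rcases eq_or_lt_of_le hp0 with h0 | h0
      · simp [← h0]
      · nlinarith [Real.exp_pos h]
    have hfact : (b * Real.exp (t * a) - a * Real.exp (t * b)) / (b - a)
        = Real.exp (-p * h) * (1 - p + p * Real.exp h) := by
      have hexp : Real.exp (t * b) = Real.exp (t * a) * Real.exp h := by
        rw [← Real.exp_add]; congr 1; rw [hh]; ring
      have hpa : -p * h = t * a := by
        rw [hp, hh]; field_simp
      have key : ∀ A B : ℝ, (b * A - a * (A * B)) / (b - a) = A * (1 - p + p * B) := by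
        intro A B; rw [hp]; field_simp; ring
      rw [hpa, hexp]
      exact key _ _
    rw [hfact]
    have : Real.exp (-p * h) * (1 - p + p * Real.exp h)
        = Real.exp (Real.log (1 - p + p * Real.exp h) - p * h) := by
      rw [Real.exp_sub, Real.exp_log hDpos, neg_mul, Real.exp_neg]
      ring
    rw [this]
    apply Real.exp_le_exp.mpr
    refine (hoeffding_aux hp0 hp1 h).trans (le_of_eq ?_)
    rw [hh]
    ring


lemma nonempty_of_prob {α : Type*} [MeasurableSpace α] (ν : Measure α)
    [IsProbabilityMeasure ν] : Nonempty α := by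
  by_contra hempty
  have : ν Set.univ = 0 := by
    simp [Set.univ_eq_empty_iff.mpr (not_nonempty_iff.mp hempty)]
  simp [measure_univ] at this

lemma bdd_diff_finset {n : ℕ} {ζ : Fin n → Type u} (f : (∀ i, ζ i) → ℝ) (c : Fin n → ℝ)
    (hbdd : ∀ (i : Fin n) (z : ∀ j, ζ j) (z' : ζ i), |f (Function.update z i z') - f z| ≤ c i) :
    ∀ (s : Finset (Fin n)) (z z' : ∀ i, ζ i), (∀ j ∉ s, z j = z' j) →
      |f z' - f z| ≤ ∑ i ∈ s, c i := by
  intro s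
  induction s using Finset.induction with
  | empty =>
    intro z z' hzz
    have : z = z' := funext fun j => hzz j (by simp)
    simp [this]
  | @insert i s hns ih =>
    intro z z' hzz
    set z'' := Function.update z' i (z i) with hz''
    have h1 : ∀ j ∉ s, z j = z'' j := by
      intro j hj
      by_cases hji : j = i
      · subst hji; simp [hz'']
      · rw [hz'', Function.update_of_ne hji]
        exact hzz j (by simp [hji, hj])
    have h2 : |f z' - f z''| ≤ c i := by
      have : z' = Function.update z'' i (z' i) := by
        funext j
        by_cases hji : j = i
        · subst hji; simp
        · simp [Function.update_of_ne hji, hz'']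
      rw [this]
      simpa using hbdd i z'' (z' i)
    calc |f z' - f z| ≤ |f z' - f z''| + |f z'' - f z| := abs_sub_le _ _ _
    _ ≤ c i + ∑ j ∈ s, c j := add_le_add h2 (ih z z'' h1)
    _ = ∑ j ∈ insert i s, c j := (Finset.sum_insert hns).symm

lemma insertNth_update_aux {n : ℕ} {α : Fin (n + 1) → Type u} (i : Fin (n + 1)) (x : α i)
    (y : ∀ j, α (i.succAbove j)) (j : Fin n) (v : α (i.succAbove j)) :
    i.insertNth x (Function.update y j v) = Function.update (i.insertNth x y) (i.succAbove j) v := by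
  funext k
  refine Fin.succAboveCases i ?_ ?_ k
  · rw [Fin.insertNth_apply_same,
      Function.update_of_ne (Fin.succAbove_ne i j).symm, Fin.insertNth_apply_same]
  · intro m
    rw [Fin.insertNth_apply_succAbove]
    by_cases hmj : m = j
    · subst hmj
      simp
    · have hne : i.succAbove m ≠ i.succAbove j :=
        fun h => hmj (Fin.succAbove_right_injective h)
      rw [Function.update_of_ne hmj, Function.update_of_ne hne, Fin.insertNth_apply_succAbove]

theorem mgf_pi : ∀ {n : ℕ} (ζ : Fin n → Type u) [∀ i, MeasurableSpace (ζ i)]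
    (μi : ∀ i, Measure (ζ i)) [∀ i, IsProbabilityMeasure (μi i)]
    (f : (∀ i, ζ i) → ℝ) (_hf : Measurable f) (c : Fin n → ℝ)
    (_hbdd : ∀ (i : Fin n) (z : ∀ j, ζ j) (z' : ζ i), |f (Function.update z i z') - f z| ≤ c i)
    (t : ℝ),
    ∫ z, Real.exp (t * (f z - ∫ z', f z' ∂(Measure.pi μi))) ∂(Measure.pi μi)
      ≤ Real.exp (t ^ 2 * (∑ i, c i ^ 2) / 8) := by
  intro n
  induction n with
  | zero =>
    intro ζ _ μi _ f hf c hbdd t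
    haveI : Subsingleton (∀ i : Fin 0, ζ i) := ⟨fun a b => funext fun i => i.elim0⟩
    have hval : ∀ z : ∀ i, ζ i, Real.exp (t * (f z - ∫ z', f z' ∂(Measure.pi μi))) = 1 := by
      intro z
      have hfz : (fun z' : ∀ i, ζ i => f z') = fun _ => f z :=
        funext fun z' => congrArg f (Subsingleton.elim _ _)
      rw [hfz, integral_const, probReal_univ]
      simp
    simp only [hval]
    rw [integral_const, probReal_univ]
    simp
  | succ n ih =>
    intro ζ _ μi _ f hf c hbdd t
    -- setup
    haveI : ∀ i, Nonempty (ζ i) := fun i => nonempty_of_prob (μi i)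
    set i0 : Fin (n + 1) := 0 with hi0
    set pm : Measure (∀ i, ζ i) := Measure.pi μi with hpm
    set pm' : Measure (∀ j : Fin n, ζ (i0.succAbove j)) :=
      Measure.pi (fun j => μi (i0.succAbove j)) with hpm'
    set μ₀ : Measure (ζ i0) := μi i0 with hμ₀
    set e := MeasurableEquiv.piFinSuccAbove ζ i0 with he
    have hmp : MeasurePreserving e pm (μ₀.prod pm') := measurePreserving_piFinSuccAbove μi i0
    set f' : ζ i0 × (∀ j, ζ (i0.succAbove j)) → ℝ := fun p => f (e.symm p) with hf'
    have hf'meas : Measurable f' := hf.comp e.symm.measurable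
    have hf'apply : ∀ x y, f' (x, y) = f (i0.insertNth x y) := by
      intro x y
      simp [hf', he, MeasurableEquiv.piFinSuccAbove_symm_apply, Fin.insertNthEquiv]
    -- nonnegativity of c
    have hc : ∀ i, 0 ≤ c i := by
      intro i
      have z : ∀ j, ζ j := fun j => Classical.ofNonempty
      have := hbdd i z (z i)
      rwa [Function.update_eq_self, sub_self, abs_zero] at this
    -- global bound on f
    obtain ⟨z₀⟩ : Nonempty (∀ i, ζ i) := ⟨fun i => Classical.ofNonempty⟩
    set K : ℝ := |f z₀| + ∑ i, c i with hK
    have hKb : ∀ z, |f z| ≤ K := by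
      intro z
      have := bdd_diff_finset f c hbdd Finset.univ z₀ z (fun j hj => absurd (Finset.mem_univ j) hj)
      calc |f z| = |f z₀ + (f z - f z₀)| := by ring_nf
      _ ≤ |f z₀| + |f z - f z₀| := abs_add_le _ _
      _ ≤ K := by rw [hK]; exact add_le_add (le_refl _) this
    have hK0 : 0 ≤ K := le_trans (abs_nonneg _) (hKb z₀)
    set M : ℝ := ∫ z, f z ∂pm with hM
    have hMK : |M| ≤ K := by
      rw [hM]
      calc |∫ z, f z ∂pm| = ‖∫ z, f z ∂pm‖ := rfl
      _ ≤ K := by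
        refine (norm_integral_le_of_norm_le_const (C := K) (ae_of_all _ fun z => ?_)).trans ?_
        · exact hKb z
        · simp [measure_univ]
    have hf'K : ∀ p, |f' p| ≤ K := fun p => hKb _
    have hintf' : Integrable f' (μ₀.prod pm') := integrable_of_bdd hf'meas hf'K
    have hMeq : M = ∫ p, f' p ∂(μ₀.prod pm') := by
      rw [hM]
      rw [← hmp.integral_comp e.measurableEmbedding f']
      congr 1
      funext z
      simp [hf']
    -- the conditional mean g
    set g : (∀ j, ζ (i0.succAbove j)) → ℝ := fun y => ∫ x, f' (x, y) ∂μ₀ with hg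
    have hgmeas : Measurable g :=
      hf'meas.stronglyMeasurable.integral_prod_left'.measurable
    have hgK : ∀ y, |g y| ≤ K := by
      intro y
      calc |g y| = ‖∫ x, f' (x, y) ∂μ₀‖ := rfl
      _ ≤ K := by
        refine (norm_integral_le_of_norm_le_const (C := K) (ae_of_all _ fun x => ?_)).trans ?_
        · exact hf'K _
        · simp [measure_univ]
    have hintf'y : ∀ y, Integrable (fun x => f' (x, y)) μ₀ := fun y =>
      integrable_of_bdd (hf'meas.comp (measurable_id.prodMk measurable_const))
        (fun x => hf'K _)
    have hgbdd : ∀ (j : Fin n) (y : ∀ j', ζ (i0.succAbove j')) (v : ζ (i0.succAbove j)),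
        |g (Function.update y j v) - g y| ≤ c (i0.succAbove j) := by
      intro j y v
      have hsub : g (Function.update y j v) - g y
          = ∫ x, (f' (x, Function.update y j v) - f' (x, y)) ∂μ₀ := by
        rw [integral_sub (hintf'y _) (hintf'y _)]
      rw [hsub]
      calc |∫ x, (f' (x, Function.update y j v) - f' (x, y)) ∂μ₀|
          = ‖∫ x, (f' (x, Function.update y j v) - f' (x, y)) ∂μ₀‖ := rfl
      _ ≤ c (i0.succAbove j) := by
        refine (norm_integral_le_of_norm_le_const (C := c (i0.succAbove j)) (ae_of_all _ fun x => ?_)).trans ?_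
        · show |f' (x, Function.update y j v) - f' (x, y)| ≤ c (i0.succAbove j)
          rw [hf'apply, hf'apply, insertNth_update_aux]
          exact hbdd (i0.succAbove j) (i0.insertNth x y) v
        · simp [measure_univ]
    have hgmean : ∫ y, g y ∂pm' = M := by
      rw [hMeq, integral_prod_symm f' hintf']
    -- Hoeffding for each fixed y
    have hHoeff : ∀ y, ∫ x, Real.exp (t * (f' (x, y) - g y)) ∂μ₀
        ≤ Real.exp (t ^ 2 * c i0 ^ 2 / 8) := by
      intro y
      set ay : ℝ := sInf (Set.range fun x => f' (x, y)) with hay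
      have hbddbelow : BddBelow (Set.range fun x => f' (x, y)) :=
        ⟨-K, by rintro _ ⟨x, rfl⟩; linarith [abs_le.mp (hf'K (x, y))|>.1]⟩
      have hrange_ne : (Set.range fun x => f' (x, y)).Nonempty :=
        ⟨_, Set.mem_range_self (Classical.ofNonempty : ζ i0)⟩
      have hlow : ∀ x, ay ≤ f' (x, y) := fun x => csInf_le hbddbelow (Set.mem_range_self x)
      have hdiff : ∀ x x', f' (x, y) - f' (x', y) ≤ c i0 := by
        intro x x'
        have h1 : (i0.insertNth x y) = Function.update (i0.insertNth x' y) i0 x :=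
          (Fin.update_insertNth i0 x' x y).symm
        rw [hf'apply, hf'apply, h1]
        have := hbdd i0 (i0.insertNth x' y) x
        linarith [abs_le.mp this |>.1, abs_le.mp this |>.2]
      have hupp : ∀ x, f' (x, y) ≤ ay + c i0 := by
        intro x
        have : f' (x, y) - c i0 ≤ ay := by
          apply le_csInf hrange_ne
          rintro _ ⟨x', rfl⟩
          linarith [hdiff x x']
        linarith
      have hXmeas : Measurable (fun x => f' (x, y) - g y) :=
        (hf'meas.comp (measurable_id.prodMk measurable_const)).sub measurable_const
      have hX0 : ∫ x, (f' (x, y) - g y) ∂μ₀ = 0 := by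
        rw [integral_sub (hintf'y y) (integrable_const _), integral_const, probReal_univ]
        simp [hg]
      have := hoeffding_lemma μ₀ hXmeas (a := ay - g y) (b := ay - g y + c i0)
        (fun x => ⟨by linarith [hlow x], by linarith [hupp x]⟩) hX0 t
      calc ∫ x, Real.exp (t * (f' (x, y) - g y)) ∂μ₀
          ≤ Real.exp (t ^ 2 * (ay - g y + c i0 - (ay - g y)) ^ 2 / 8) := this
      _ = Real.exp (t ^ 2 * c i0 ^ 2 / 8) := by ring_nf
    -- main chain
    have hint_exp : Integrable (fun p => Real.exp (t * (f' p - M))) (μ₀.prod pm') := by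
      refine integrable_of_bdd (by fun_prop) (C := Real.exp (|t| * (K + K))) (fun p => ?_)
      rw [abs_of_pos (Real.exp_pos _)]
      apply Real.exp_le_exp.mpr
      calc t * (f' p - M) ≤ |t * (f' p - M)| := le_abs_self _
      _ = |t| * |f' p - M| := abs_mul _ _
      _ ≤ |t| * (K + K) := by
          apply mul_le_mul_of_nonneg_left _ (abs_nonneg t)
          calc |f' p - M| ≤ |f' p| + |M| := abs_sub _ _
          _ ≤ K + K := add_le_add (hf'K p) hMK
    have hstep0 : ∫ z, Real.exp (t * (f z - M)) ∂pm = ∫ p, Real.exp (t * (f' p - M)) ∂(μ₀.prod pm') := by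
      rw [← hmp.integral_comp e.measurableEmbedding (fun p => Real.exp (t * (f' p - M)))]
      congr 1
      funext z
      simp [hf']
    have hstep1 : ∫ p, Real.exp (t * (f' p - M)) ∂(μ₀.prod pm')
        = ∫ y, ∫ x, Real.exp (t * (f' (x, y) - M)) ∂μ₀ ∂pm' :=
      integral_prod_symm _ hint_exp
    have hinner : ∀ y, ∫ x, Real.exp (t * (f' (x, y) - M)) ∂μ₀
        ≤ Real.exp (t ^ 2 * c i0 ^ 2 / 8) * Real.exp (t * (g y - M)) := by
      intro y
      have heq : ∀ x, Real.exp (t * (f' (x, y) - M))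
          = Real.exp (t * (f' (x, y) - g y)) * Real.exp (t * (g y - M)) := by
        intro x
        rw [← Real.exp_add]
        congr 1
        ring
      simp only [heq]
      rw [integral_mul_const]
      exact mul_le_mul_of_nonneg_right (hHoeff y) (Real.exp_nonneg _)
    have hint_rhs : Integrable
        (fun y => Real.exp (t ^ 2 * c i0 ^ 2 / 8) * Real.exp (t * (g y - M))) pm' := by
      refine integrable_of_bdd (by fun_prop)
        (C := Real.exp (t ^ 2 * c i0 ^ 2 / 8) * Real.exp (|t| * (K + K))) (fun y => ?_)
      rw [abs_of_pos (by positivity)]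
      apply mul_le_mul_of_nonneg_left _ (Real.exp_nonneg _)
      apply Real.exp_le_exp.mpr
      calc t * (g y - M) ≤ |t * (g y - M)| := le_abs_self _
      _ = |t| * |g y - M| := abs_mul _ _
      _ ≤ |t| * (K + K) := by
          apply mul_le_mul_of_nonneg_left _ (abs_nonneg t)
          calc |g y - M| ≤ |g y| + |M| := abs_sub _ _
          _ ≤ K + K := add_le_add (hgK y) hMK
    have hstep2 : ∫ y, ∫ x, Real.exp (t * (f' (x, y) - M)) ∂μ₀ ∂pm'
        ≤ Real.exp (t ^ 2 * c i0 ^ 2 / 8) * ∫ y, Real.exp (t * (g y - M)) ∂pm' := by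
      rw [← integral_const_mul]
      refine integral_mono_of_nonneg (ae_of_all _ fun y => ?_) hint_rhs (ae_of_all _ fun y => hinner y)
      exact integral_nonneg fun x => Real.exp_nonneg _
    have hstep3 : ∫ y, Real.exp (t * (g y - M)) ∂pm'
        ≤ Real.exp (t ^ 2 * (∑ j, c (i0.succAbove j) ^ 2) / 8) := by
      have := ih (fun j => ζ (i0.succAbove j)) (fun j => μi (i0.succAbove j)) g hgmeas
        (fun j => c (i0.succAbove j)) hgbdd t
      rwa [← hpm', hgmean] at this
    calc ∫ z, Real.exp (t * (f z - ∫ z', f z' ∂(Measure.pi μi))) ∂(Measure.pi μi)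
        = ∫ p, Real.exp (t * (f' p - M)) ∂(μ₀.prod pm') := hstep0
    _ = ∫ y, ∫ x, Real.exp (t * (f' (x, y) - M)) ∂μ₀ ∂pm' := hstep1
    _ ≤ Real.exp (t ^ 2 * c i0 ^ 2 / 8) * ∫ y, Real.exp (t * (g y - M)) ∂pm' := hstep2
    _ ≤ Real.exp (t ^ 2 * c i0 ^ 2 / 8)
        * Real.exp (t ^ 2 * (∑ j, c (i0.succAbove j) ^ 2) / 8) :=
      mul_le_mul_of_nonneg_left hstep3 (Real.exp_nonneg _)
    _ = Real.exp (t ^ 2 * (∑ i, c i ^ 2) / 8) := by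
      rw [← Real.exp_add]
      congr 1
      rw [Fin.sum_univ_succAbove (fun i => c i ^ 2) i0]
      ring



end McdAux

/-- McDiarmid's inequality: if `q : Z₁ × ⋯ × Zₙ → ℝ` satisfies the bounded
differences property with constants `c₁,…,cₙ` and `Z₁,…,Zₙ` are independent random
variables, then for all `ε > 0`,
`P(q(Z₁,…,Zₙ) − E[q(Z₁,…,Zₙ)] > ε) ≤ exp(−2ε² / ∑ᵢ cᵢ²)`. -/
theorem mcdiarmid_inequality
    {Ω : Type*} [MeasurableSpace Ω] (μ : Measure Ω) [IsProbabilityMeasure μ]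
    (n : ℕ) (ζ : Fin n → Type*) [∀ i, MeasurableSpace (ζ i)]
    (q : (∀ i, ζ i) → ℝ) (c : Fin n → ℝ)
    (Z : ∀ i, Ω → ζ i)
    (hZmeas : ∀ i, Measurable (Z i))
    (hqmeas : Measurable q)
    (hindep : iIndepFun Z μ)
    (hbdd : ∀ (i : Fin n) (z : ∀ j, ζ j) (z' : ζ i),
      |q (Function.update z i z') - q z| ≤ c i)
    (hint : Integrable (fun ω => q (fun i => Z i ω)) μ)
    (ε : ℝ) (hε : 0 < ε) :
    μ {ω | q (fun i => Z i ω) - (∫ ω', q (fun i => Z i ω') ∂μ) > ε} ≤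
      ENNReal.ofReal (Real.exp (-2 * ε ^ 2 / ∑ i, c i ^ 2)) := by
  set S : ℝ := ∑ i, c i ^ 2 with hS
  have hS0 : 0 ≤ S := Finset.sum_nonneg fun i _ => sq_nonneg _
  rcases eq_or_lt_of_le hS0 with hSzero | hSpos
  · -- degenerate case : S = 0, RHS = 1
    rw [← hSzero, div_zero, Real.exp_zero, ENNReal.ofReal_one]
    exact prob_le_one
  -- main case
  set μi : ∀ i, Measure (ζ i) := fun i => μ.map (Z i) with hμi
  haveI : ∀ i, IsProbabilityMeasure (μi i) := fun i =>
    Measure.isProbabilityMeasure_map (hZmeas i).aemeasurable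
  set T : Ω → ∀ i, ζ i := fun ω i => Z i ω with hT
  have hTmeas : Measurable T := measurable_pi_iff.mpr hZmeas
  have hmap : Measure.pi μi = μ.map T := by
    refine Measure.pi_eq fun s hs => ?_
    rw [Measure.map_apply hTmeas (MeasurableSet.univ_pi hs)]
    have hpre : T ⁻¹' (Set.pi Set.univ s) = ⋂ i, Z i ⁻¹' s i := by
      ext ω; simp [Set.mem_pi, hT]
    rw [hpre]
    have := hindep.measure_inter_preimage_eq_mul Finset.univ (sets := s) (fun i _ => hs i)
    simp only [Finset.mem_univ, Set.iInter_true] at this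
    rw [this]
    refine Finset.prod_congr rfl fun i _ => ?_
    rw [hμi, Measure.map_apply (hZmeas i) (hs i)]
  set m : ℝ := ∫ ω', q (fun i => Z i ω') ∂μ with hm
  have hmeq : m = ∫ z, q z ∂(Measure.pi μi) := by
    rw [hmap, integral_map hTmeas.aemeasurable hqmeas.aestronglyMeasurable]
  set E : Set (∀ i, ζ i) := {z | q z - m > ε} with hE
  have hEmeas : MeasurableSet E := by
    have : Measurable fun z => q z - m := hqmeas.sub measurable_const
    exact measurableSet_lt measurable_const this
  have hlhs : μ {ω | q (fun i => Z i ω) - m > ε} = (Measure.pi μi) E := by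
    rw [hmap, Measure.map_apply hTmeas hEmeas]
    rfl
  rw [hlhs]
  -- boundedness of q
  haveI : IsProbabilityMeasure (Measure.pi μi) := by infer_instance
  haveI hne : Nonempty (∀ i, ζ i) := nonempty_of_prob (Measure.pi μi)
  obtain ⟨z₀⟩ := hne
  set K : ℝ := |q z₀| + ∑ i, c i with hK
  have hKb : ∀ z, |q z| ≤ K := by
    intro z
    have := bdd_diff_finset q c hbdd Finset.univ z₀ z (fun j hj => absurd (Finset.mem_univ j) hj)
    calc |q z| = |q z₀ + (q z - q z₀)| := by ring_nf
    _ ≤ |q z₀| + |q z - q z₀| := abs_add_le _ _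
    _ ≤ K := by rw [hK]; exact add_le_add (le_refl _) this
  have hmK : |m| ≤ K := by
    rw [hmeq]
    calc |∫ z, q z ∂(Measure.pi μi)| = ‖∫ z, q z ∂(Measure.pi μi)‖ := rfl
    _ ≤ K := by
      refine (norm_integral_le_of_norm_le_const (C := K) (ae_of_all _ fun z => hKb z)).trans ?_
      simp [measure_univ]
  set t : ℝ := 4 * ε / S with ht
  have ht0 : 0 ≤ t := by positivity
  have hint_exp : Integrable (fun z => Real.exp (t * (q z - m))) (Measure.pi μi) := by
    refine integrable_of_bdd (by fun_prop) (C := Real.exp (|t| * (K + K))) (fun z => ?_)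
    rw [abs_of_pos (Real.exp_pos _)]
    apply Real.exp_le_exp.mpr
    calc t * (q z - m) ≤ |t * (q z - m)| := le_abs_self _
    _ = |t| * |q z - m| := abs_mul _ _
    _ ≤ |t| * (K + K) := by
        apply mul_le_mul_of_nonneg_left _ (abs_nonneg t)
        calc |q z - m| ≤ |q z| + |m| := abs_sub _ _
        _ ≤ K + K := add_le_add (hKb z) hmK
  have hmgf : mgf (fun z => q z - m) (Measure.pi μi) t ≤ Real.exp (t ^ 2 * S / 8) := by
    have := mgf_pi ζ μi q hqmeas c hbdd t
    rw [← hmeq] at this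
    exact this
  have hchern := measure_ge_le_exp_mul_mgf (X := fun z => q z - m) (μ := Measure.pi μi)
    ε ht0 hint_exp
  have hfinal : ((Measure.pi μi) {z | ε ≤ q z - m}).toReal
      ≤ Real.exp (-2 * ε ^ 2 / S) := by
    refine hchern.trans ?_
    calc Real.exp (-t * ε) * mgf (fun z => q z - m) (Measure.pi μi) t
        ≤ Real.exp (-t * ε) * Real.exp (t ^ 2 * S / 8) :=
          mul_le_mul_of_nonneg_left hmgf (Real.exp_nonneg _)
    _ = Real.exp (-t * ε + t ^ 2 * S / 8) := (Real.exp_add _ _).symm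
    _ = Real.exp (-2 * ε ^ 2 / S) := by
        congr 1
        rw [ht]
        field_simp
        ring
  have hsub : E ⊆ {z | ε ≤ q z - m} := by
    intro z hz
    simp only [Set.mem_setOf_eq] at hz ⊢
    exact le_of_lt hz
  calc (Measure.pi μi) E ≤ (Measure.pi μi) {z | ε ≤ q z - m} := measure_mono hsub
  _ = ENNReal.ofReal (((Measure.pi μi) {z | ε ≤ q z - m}).toReal) :=
      (ENNReal.ofReal_toReal (measure_ne_top _ _)).symm
  _ ≤ ENNReal.ofReal (Real.exp (-2 * ε ^ 2 / S)) := ENNReal.ofReal_le_ofReal hfinal
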